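/- For every n ≥ 1 and every k with 0 ≤ k ≤ n, we have 2^k · #{π : π is a permutation of [n] avoiding both (a-bc) and (a-cb) and 1 + des π = n - k} = C(n,k) · C(n-k,k) · k!, where C denotes the binomial coefficient. (Equivalently, the n-th Eulerian polynomial for {a-bc, a-cb}-avoiding permutations is A_n(x) = Σ_{k=0}^{n} C(n,k) C(n-k,k) (k!/2^k) x^{n-k}.) -/

import Mathlib

/-- `π` avoids the pattern (a-bc). -/
def AvoidsAdBC (n : ℕ) (π : Equiv.Perm (Fin n)) : Prop :=
  ∀ (i j : ℕ) (hi : i < n) (hj : j + 1 < n), i < j →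
    ¬ (π ⟨i, hi⟩ < π ⟨j, Nat.lt_of_succ_lt hj⟩ ∧
       π ⟨j, Nat.lt_of_succ_lt hj⟩ < π ⟨j + 1, hj⟩)

/-- `π` avoids the pattern (a-cb). -/
def AvoidsAdCB (n : ℕ) (π : Equiv.Perm (Fin n)) : Prop :=
  ∀ (i j : ℕ) (hi : i < n) (hj : j + 1 < n), i < j →
    ¬ (π ⟨i, hi⟩ < π ⟨j + 1, hj⟩ ∧
       π ⟨j + 1, hj⟩ < π ⟨j, Nat.lt_of_succ_lt hj⟩)

/-- The number of descents of `π`. -/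
noncomputable def des (n : ℕ) (π : Equiv.Perm (Fin n)) : ℕ :=
  {i : ℕ | ∃ h : i + 1 < n, π ⟨i + 1, h⟩ < π ⟨i, Nat.lt_of_succ_lt h⟩}.ncard

/-- combined avoidance -/
def EAvoid (n : ℕ) (π : Equiv.Perm (Fin n)) : Prop :=
  ∀ (i j : ℕ) (hi : i < n) (hj : j + 1 < n), i < j →
    ¬ (π ⟨i, hi⟩ < π ⟨j, Nat.lt_of_succ_lt hj⟩ ∧
       π ⟨i, hi⟩ < π ⟨j + 1, hj⟩)

lemma eavoid_iff (n : ℕ) (π : Equiv.Perm (Fin n)) :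
    (AvoidsAdBC n π ∧ AvoidsAdCB n π) ↔ EAvoid n π := by
  constructor
  · rintro ⟨h1, h2⟩ i j hi hj hij ⟨ha, hb⟩
    have hne : π ⟨j, Nat.lt_of_succ_lt hj⟩ ≠ π ⟨j + 1, hj⟩ := by
      intro h
      have := π.injective h
      simp [Fin.mk.injEq] at this
    rcases lt_or_gt_of_ne hne with h | h
    · exact h1 i j hi hj hij ⟨ha, h⟩
    · exact h2 i j hi hj hij ⟨hb, h⟩
  · intro h
    refine ⟨fun i j hi hj hij ⟨ha, hb⟩ => ?_, fun i j hi hj hij ⟨ha, hb⟩ => ?_⟩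
    · exact h i j hi hj hij ⟨ha, ha.trans hb⟩
    · exact h i j hi hj hij ⟨ha.trans hb, ha⟩

section Ins
variable {m : ℕ}

def insF (σ : Equiv.Perm (Fin m)) (v : Fin (m + 1)) : Fin (m + 1) → Fin (m + 1) :=
  Fin.snoc (fun i => v.succAbove (σ i)) v

lemma insF_injective (σ : Equiv.Perm (Fin m)) (v : Fin (m + 1)) :
    Function.Injective (insF σ v) := by
  intro a b hab
  induction a using Fin.lastCases with
  | last =>
    induction b using Fin.lastCases with
    | last => rfl
    | cast b =>
      simp only [insF, Fin.snoc_last, Fin.snoc_castSucc] at hab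
      exact absurd hab.symm (Fin.succAbove_ne v (σ b))
  | cast a =>
    induction b using Fin.lastCases with
    | last =>
      simp only [insF, Fin.snoc_last, Fin.snoc_castSucc] at hab
      exact absurd hab (Fin.succAbove_ne v (σ a))
    | cast b =>
      simp only [insF, Fin.snoc_castSucc] at hab
      have := σ.injective (Fin.succAbove_right_injective hab)
      exact congrArg Fin.castSucc this

noncomputable def ins (σ : Equiv.Perm (Fin m)) (v : Fin (m + 1)) : Equiv.Perm (Fin (m + 1)) :=
  Equiv.ofBijective _ (Finite.injective_iff_bijective.mp (insF_injective σ v))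

@[simp] lemma ins_castSucc (σ : Equiv.Perm (Fin m)) (v : Fin (m + 1)) (i : Fin m) :
    ins σ v i.castSucc = v.succAbove (σ i) := by
  simp [ins, Equiv.ofBijective, insF]

@[simp] lemma ins_last (σ : Equiv.Perm (Fin m)) (v : Fin (m + 1)) :
    ins σ v (Fin.last m) = v := by
  simp [ins, Equiv.ofBijective, insF]

lemma ins_mk (σ : Equiv.Perm (Fin m)) (v : Fin (m + 1)) (i : ℕ) (h : i < m)
    (h2 : i < m + 1) : ins σ v ⟨i, h2⟩ = v.succAbove (σ ⟨i, h⟩) := by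
  have : (⟨i, h2⟩ : Fin (m + 1)) = (⟨i, h⟩ : Fin m).castSucc := rfl
  rw [this, ins_castSucc]

lemma ins_pair_injective :
    Function.Injective (fun p : Equiv.Perm (Fin m) × Fin (m + 1) => ins p.1 p.2) := by
  rintro ⟨σ, v⟩ ⟨τ, w⟩ h
  simp only at h
  have hv : v = w := by
    have := congrArg (fun e => e (Fin.last m)) h
    simpa using this
  subst hv
  have hστ : σ = τ := by
    ext i
    have := congrArg (fun e => e (Fin.castSucc i)) h
    simp only [ins_castSucc] at this
    have := Fin.succAbove_right_injective this
    exact congrArg Fin.val this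
  simp [hστ]

lemma ins_pair_bijective :
    Function.Bijective (fun p : Equiv.Perm (Fin m) × Fin (m + 1) => ins p.1 p.2) := by
  rw [Fintype.bijective_iff_injective_and_card]
  refine ⟨ins_pair_injective, ?_⟩
  simp [Fintype.card_perm, Nat.factorial_succ, Nat.mul_comm]

lemma exists_ins (τ : Equiv.Perm (Fin (m + 1))) :
    ∃ σ v, τ = ins σ v := by
  obtain ⟨⟨σ, v⟩, h⟩ := ins_pair_bijective.surjective τ
  exact ⟨σ, v, h.symm⟩

end Ins

section DesAvoid
variable {m : ℕ}

lemma desSet_finite (n : ℕ) (π : Equiv.Perm (Fin n)) :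
    {i : ℕ | ∃ h : i + 1 < n, π ⟨i + 1, h⟩ < π ⟨i, Nat.lt_of_succ_lt h⟩}.Finite := by
  apply Set.Finite.subset (Set.finite_Iio n)
  rintro i ⟨h, -⟩
  exact Nat.lt_of_succ_lt h

lemma des_le (n : ℕ) (π : Equiv.Perm (Fin (n + 1))) : des (n + 1) π ≤ n := by
  unfold des
  calc {i : ℕ | ∃ h : i + 1 < n + 1, π ⟨i + 1, h⟩ < π ⟨i, Nat.lt_of_succ_lt h⟩}.ncard
      ≤ (Set.Iio n).ncard := by
        apply Set.ncard_le_ncard _ (Set.finite_Iio n)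
        rintro i ⟨h, -⟩
        exact Nat.lt_of_succ_lt_succ h
    _ = n := by simp [Set.ncard_eq_toFinset_card']

lemma des_ins (σ : Equiv.Perm (Fin (m + 1))) (v : Fin (m + 2)) :
    des (m + 2) (ins σ v) =
      des (m + 1) σ + (if v ≤ (σ (Fin.last m)).castSucc then 1 else 0) := by
  unfold des
  set D : Set ℕ :=
    {i : ℕ | ∃ h : i + 1 < m + 1, σ ⟨i + 1, h⟩ < σ ⟨i, Nat.lt_of_succ_lt h⟩} with hD
  have hfin : D.Finite := desSet_finite (m + 1) σ
  have hmem : ∀ i : ℕ, i < m →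
      ((∃ h : i + 1 < m + 2, ins σ v ⟨i + 1, h⟩ < ins σ v ⟨i, Nat.lt_of_succ_lt h⟩) ↔ i ∈ D) := by
    intro i hi
    constructor
    · rintro ⟨h, hlt⟩
      have h1 : i + 1 < m + 1 := by omega
      rw [ins_mk σ v (i+1) h1, ins_mk σ v i (by omega)] at hlt
      exact ⟨h1, Fin.succAbove_lt_succAbove_iff.mp hlt⟩
    · rintro ⟨h1, hlt⟩
      refine ⟨by omega, ?_⟩
      rw [ins_mk σ v (i+1) h1, ins_mk σ v i (by omega)]
      exact Fin.succAbove_lt_succAbove_iff.mpr hlt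
  have hlastval : (ins σ v) ⟨m + 1, by omega⟩ = v := ins_last σ v
  have hmval : (ins σ v) ⟨m, by omega⟩ = v.succAbove (σ (Fin.last m)) := by
    have : (⟨m, by omega⟩ : Fin (m + 1)) = Fin.last m := rfl
    rw [ins_mk σ v m (by omega), this]
  have hmm : ∀ i : ℕ, (∃ h : i + 1 < m + 2, ins σ v ⟨i + 1, h⟩ < ins σ v ⟨i, Nat.lt_of_succ_lt h⟩)
      → i ≤ m := by
    rintro i ⟨h, -⟩; omega
  have hDsub : ∀ i ∈ D, i < m := by
    rintro i ⟨h, -⟩; omega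
  by_cases hc : v ≤ (σ (Fin.last m)).castSucc
  · have hset : {i : ℕ | ∃ h : i + 1 < m + 2, ins σ v ⟨i + 1, h⟩ < ins σ v ⟨i, Nat.lt_of_succ_lt h⟩}
        = insert m D := by
      ext i
      simp only [Set.mem_setOf_eq, Set.mem_insert_iff]
      constructor
      · intro hd
        rcases Nat.lt_or_ge i m with hi | hi
        · exact Or.inr ((hmem i hi).mp hd)
        · have := hmm i hd
          left; omega
      · rintro (rfl | hd)
        · refine ⟨by omega, ?_⟩
          rw [hlastval, hmval]
          exact (Fin.lt_succAbove_iff_le_castSucc _ _).mpr hc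
        · exact (hmem i (hDsub i hd)).mpr hd
    have hnm : m ∉ D := fun h => absurd (hDsub m h) (lt_irrefl m)
    rw [hset, Set.ncard_insert_of_notMem hnm hfin, if_pos hc]
  · have hset : {i : ℕ | ∃ h : i + 1 < m + 2, ins σ v ⟨i + 1, h⟩ < ins σ v ⟨i, Nat.lt_of_succ_lt h⟩}
        = D := by
      ext i
      simp only [Set.mem_setOf_eq]
      constructor
      · intro hd
        rcases Nat.lt_or_ge i m with hi | hi
        · exact (hmem i hi).mp hd
        · exfalso
          have him := hmm i hd
          have : i = m := by omega
          subst this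
          obtain ⟨h, hlt⟩ := hd
          rw [hlastval, hmval] at hlt
          exact hc ((Fin.lt_succAbove_iff_le_castSucc _ _).mp hlt)
      · intro hd
        exact (hmem i (hDsub i hd)).mpr hd
    rw [hset, if_neg hc, Nat.add_zero]

lemma des_ins_zero (σ : Equiv.Perm (Fin (m + 1))) :
    des (m + 2) (ins σ 0) = des (m + 1) σ + 1 := by
  rw [des_ins]
  simp [Fin.zero_le]

lemma des_ins_ne_zero (σ : Equiv.Perm (Fin (m + 1))) (v : Fin (m + 2))
    (hv : v ≠ 0) (h0 : σ (Fin.last m) = 0) :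
    des (m + 2) (ins σ v) = des (m + 1) σ := by
  rw [des_ins, h0]
  have : ¬ v ≤ (0 : Fin (m+1)).castSucc := by
    rw [Fin.castSucc_zero, Fin.le_zero_iff]
    exact hv
  rw [if_neg this, Nat.add_zero]

end DesAvoid

section AvoidIns
variable {m : ℕ}

lemma avoid_ins (σ : Equiv.Perm (Fin (m + 1))) (v : Fin (m + 2)) :
    EAvoid (m + 2) (ins σ v) ↔ EAvoid (m + 1) σ ∧ (v = 0 ∨ σ (Fin.last m) = 0) := by
  constructor
  · intro h
    constructor
    · rintro i j hi hj hij ⟨ha, hb⟩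
      refine h i j (by omega) (by omega) hij ⟨?_, ?_⟩
      · rw [ins_mk σ v i (by omega), ins_mk σ v j (by omega)]
        exact Fin.succAbove_lt_succAbove_iff.mpr ha
      · rw [ins_mk σ v i (by omega), ins_mk σ v (j + 1) (by omega)]
        exact Fin.succAbove_lt_succAbove_iff.mpr hb
    · by_contra hcon
      push_neg at hcon
      obtain ⟨hv0, hl0⟩ := hcon
      set i0 := σ⁻¹ 0 with hi0
      have hσi0 : σ i0 = 0 := Equiv.apply_symm_apply σ 0
      have hne : i0 ≠ Fin.last m := fun hE => hl0 (hE ▸ hσi0)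
      have hival : (i0 : ℕ) < m := by
        rcases Nat.lt_or_ge (i0 : ℕ) m with hlt | hge
        · exact hlt
        · exfalso
          apply hne
          have := i0.isLt
          ext
          simp only [Fin.val_last]
          omega
      refine h (i0 : ℕ) m (by omega) (by omega) hival ⟨?_, ?_⟩
      · rw [ins_mk σ v (i0 : ℕ) (by omega), ins_mk σ v m (by omega)]
        have e1 : (⟨(i0 : ℕ), by omega⟩ : Fin (m + 1)) = i0 := by ext; rfl
        have e2 : (⟨m, by omega⟩ : Fin (m + 1)) = Fin.last m := by ext; rfl
        rw [e1, e2, hσi0]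
        rw [Fin.succAbove_ne_zero_zero hv0]
        rcases (σ (Fin.last m)).eq_zero_or_eq_succ with h0 | ⟨y, hy⟩
        · exact absurd h0 hl0
        · exact Fin.pos_iff_ne_zero.mpr (Fin.succAbove_ne_zero hv0 hl0)
      · rw [ins_mk σ v (i0 : ℕ) (by omega)]
        have e1 : (⟨(i0 : ℕ), by omega⟩ : Fin (m + 1)) = i0 := by ext; rfl
        have e3 : (⟨m + 1, by omega⟩ : Fin (m + 2)) = Fin.last (m + 1) := by ext; rfl
        rw [e1, e3, hσi0, ins_last, Fin.succAbove_ne_zero_zero hv0]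
        exact Fin.pos_iff_ne_zero.mpr hv0
  · rintro ⟨hσ, hv⟩ i j hi hj hij ⟨ha, hb⟩
    rcases Nat.lt_or_ge (j + 1) (m + 1) with hjs | hjs
    · refine hσ i j (by omega) hjs hij ⟨?_, ?_⟩
      · rw [ins_mk σ v i (by omega), ins_mk σ v j (by omega)] at ha
        exact Fin.succAbove_lt_succAbove_iff.mp ha
      · rw [ins_mk σ v i (by omega), ins_mk σ v (j + 1) (by omega)] at hb
        exact Fin.succAbove_lt_succAbove_iff.mp hb
    · have hjm : j = m := by omega
      by_cases hv0 : v = 0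
      · subst hv0
        have e3 : (⟨j + 1, hj⟩ : Fin (m + 2)) = Fin.last (m + 1) := by
          ext; simp only [Fin.val_last]; omega
        rw [e3, ins_last] at hb
        exact Fin.not_lt_zero _ hb
      · have hl0 : σ (Fin.last m) = 0 := hv.resolve_left hv0
        have e2 : (⟨j, by omega⟩ : Fin (m + 1)) = Fin.last m := by
          ext; simp only [Fin.val_last]; omega
        rw [ins_mk σ v j (by omega), e2, hl0, Fin.succAbove_ne_zero_zero hv0] at ha
        exact Fin.not_lt_zero _ ha

end AvoidIns

section Sets

def ASet (N d : ℕ) : Set (Equiv.Perm (Fin N)) := {π | EAvoid N π ∧ des N π = d}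

def BSet (m d : ℕ) : Set (Equiv.Perm (Fin (m + 1))) :=
  {π | EAvoid (m + 1) π ∧ des (m + 1) π = d ∧ π (Fin.last m) = 0}

def CSet (m d : ℕ) : Set (Equiv.Perm (Fin (m + 1))) :=
  {π | EAvoid (m + 1) π ∧ des (m + 1) π = d ∧ π (Fin.last m) ≠ 0}

lemma ASet_split (m d : ℕ) :
    (ASet (m + 1) d).ncard = (BSet m d).ncard + (CSet m d).ncard := by
  have hU : ASet (m + 1) d = BSet m d ∪ CSet m d := by
    ext π
    simp only [ASet, BSet, CSet, Set.mem_setOf_eq, Set.mem_union]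
    tauto
  have hdisj : Disjoint (BSet m d) (CSet m d) := by
    rw [Set.disjoint_left]
    rintro π ⟨-, -, h0⟩ ⟨-, -, h1⟩
    exact h1 h0
  rw [hU, Set.ncard_union_eq hdisj (Set.toFinite _) (Set.toFinite _)]

lemma ins_left_injective {m : ℕ} (v : Fin (m + 1)) :
    Function.Injective (fun σ : Equiv.Perm (Fin m) => ins σ v) := by
  intro a b h
  have : (a, v) = (b, v) := ins_pair_injective (by simpa using h)
  exact congrArg Prod.fst this

lemma BSet_succ (m d : ℕ) :
    BSet (m + 1) (d + 1) = (fun σ => ins σ (0 : Fin (m + 2))) '' ASet (m + 1) d := by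
  ext π
  constructor
  · rintro ⟨hA, hd, h0⟩
    obtain ⟨σ, v, rfl⟩ := exists_ins π
    have hv : v = 0 := by rwa [ins_last] at h0
    subst hv
    have hAσ := ((avoid_ins σ 0).mp hA).1
    rw [des_ins_zero] at hd
    exact ⟨σ, ⟨hAσ, Nat.succ_injective hd⟩, rfl⟩
  · rintro ⟨σ, ⟨hA, hd⟩, rfl⟩
    refine ⟨(avoid_ins σ 0).mpr ⟨hA, Or.inl rfl⟩, ?_, ins_last σ 0⟩
    rw [des_ins_zero, hd]

lemma BSet_succ_ncard (m d : ℕ) :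
    (BSet (m + 1) (d + 1)).ncard = (ASet (m + 1) d).ncard := by
  rw [BSet_succ, Set.ncard_image_of_injective _ (ins_left_injective 0)]

lemma BSet_zero (m : ℕ) : BSet (m + 1) 0 = ∅ := by
  ext π
  simp only [Set.mem_empty_iff_false, iff_false]
  rintro ⟨hA, hd, h0⟩
  have hmem : (m : ℕ) ∈
      {i : ℕ | ∃ h : i + 1 < m + 2, π ⟨i + 1, h⟩ < π ⟨i, Nat.lt_of_succ_lt h⟩} := by
    refine ⟨by omega, ?_⟩
    have e3 : (⟨m + 1, by omega⟩ : Fin (m + 2)) = Fin.last (m + 1) := rfl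
    rw [e3, h0]
    refine Fin.pos_iff_ne_zero.mpr ?_
    intro hz
    have := π.injective (hz.trans h0.symm)
    rw [Fin.ext_iff] at this
    simp only [Fin.val_last] at this
    omega
  unfold des at hd
  rw [Set.ncard_eq_zero (desSet_finite _ π)] at hd
  rw [hd] at hmem
  exact hmem

lemma BSet_large (m d : ℕ) (h : m < d) : BSet m d = ∅ := by
  ext π
  simp only [Set.mem_empty_iff_false, iff_false]
  rintro ⟨-, hd, -⟩
  have := des_le m π
  omega

lemma CSet_eq (m d : ℕ) :
    CSet (m + 1) d = (fun p : Equiv.Perm (Fin (m + 1)) × Fin (m + 2) => ins p.1 p.2) ''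
      ((BSet m d) ×ˢ {v : Fin (m + 2) | v ≠ 0}) := by
  ext π
  constructor
  · rintro ⟨hA, hd, h0⟩
    obtain ⟨σ, v, rfl⟩ := exists_ins π
    rw [ins_last] at h0
    obtain ⟨hAσ, hor⟩ := (avoid_ins σ v).mp hA
    have hl : σ (Fin.last m) = 0 := hor.resolve_left h0
    rw [des_ins_ne_zero σ v h0 hl] at hd
    exact ⟨(σ, v), ⟨⟨hAσ, hd, hl⟩, h0⟩, rfl⟩
  · rintro ⟨⟨σ, v⟩, ⟨⟨hA, hd, hl⟩, hv⟩, rfl⟩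
    refine ⟨(avoid_ins σ v).mpr ⟨hA, Or.inr hl⟩, ?_, ?_⟩
    · rw [des_ins_ne_zero σ v hv hl]
      exact hd
    · rw [ins_last]
      exact hv

lemma CSet_ncard (m d : ℕ) :
    (CSet (m + 1) d).ncard = (BSet m d).ncard * (m + 1) := by
  rw [CSet_eq, Set.ncard_image_of_injective _ ins_pair_injective]
  have hprod : ((BSet m d) ×ˢ {v : Fin (m + 2) | v ≠ 0}).ncard
      = (BSet m d).ncard * {v : Fin (m + 2) | v ≠ 0}.ncard := by
    rw [← Nat.card_coe_set_eq, ← Nat.card_coe_set_eq, ← Nat.card_coe_set_eq,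
      Nat.card_congr (Equiv.Set.prod _ _), Nat.card_prod]
  rw [hprod]
  congr 1
  rw [Set.ncard_eq_toFinset_card']
  simp [Finset.filter_ne']

end Sets

section Arith

def Jinv : ℕ → ℕ → ℕ
  | _, 0 => 1
  | 0, _ + 1 => 0
  | 1, _ + 1 => 0
  | n + 2, k + 1 => Jinv (n + 1) (k + 1) + (n + 1) * Jinv n k

lemma Jinv_zero (n : ℕ) : Jinv n 0 = 1 := by
  match n with
  | 0 => rfl
  | 1 => rfl
  | n + 2 => rfl

lemma Jinv_rec (n k : ℕ) :
    Jinv (n + 2) (k + 1) = Jinv (n + 1) (k + 1) + (n + 1) * Jinv n k := by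
  simp [Jinv]

lemma Jinv_big : ∀ n k, n < 2 * k → Jinv n k = 0 := by
  intro n
  induction n using Nat.strong_induction_on with
  | _ n ih =>
    intro k hk
    match n, k with
    | _, 0 => omega
    | 0, k + 1 => simp [Jinv]
    | 1, k + 1 => simp [Jinv]
    | n + 2, k + 1 =>
      rw [Jinv_rec, ih (n + 1) (by omega) (k + 1) (by omega)]
      rcases k with _ | k
      · omega
      · rw [ih n (by omega) (k + 1) (by omega)]
        simp

lemma chooseA (n k : ℕ) (h : 2 * k ≤ n) :
    n.choose k * (n - k).choose k * k.factorial * (k.factorial * (n - 2 * k).factorial)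
      = n.factorial := by
  have h1 : k ≤ n - k := by omega
  have h2 : (n - k) - k = n - 2 * k := by omega
  have e1 : (n - k).choose k * k.factorial * (n - 2 * k).factorial = (n - k).factorial := by
    rw [← h2]
    exact Nat.choose_mul_factorial_mul_factorial h1
  have e2 : n.choose k * k.factorial * (n - k).factorial = n.factorial :=
    Nat.choose_mul_factorial_mul_factorial (by omega)
  calc n.choose k * (n - k).choose k * k.factorial * (k.factorial * (n - 2 * k).factorial)
      = (n.choose k * k.factorial) * ((n - k).choose k * k.factorial * (n - 2 * k).factorial) := by
        ring
    _ = (n.choose k * k.factorial) * (n - k).factorial := by rw [e1]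
    _ = n.factorial := by rw [← e2]

lemma A_rec (n k : ℕ) :
    (n + 2).choose (k + 1) * ((n + 2) - (k + 1)).choose (k + 1) * (k + 1).factorial
      = (n + 1).choose (k + 1) * ((n + 1) - (k + 1)).choose (k + 1) * (k + 1).factorial
        + 2 * (n + 1) * (n.choose k * (n - k).choose k * k.factorial) := by
  rcases Nat.lt_or_ge n (2 * k) with h | h
  · have z1 : ((n + 2) - (k + 1)).choose (k + 1) = 0 := Nat.choose_eq_zero_of_lt (by omega)
    have z2 : ((n + 1) - (k + 1)).choose (k + 1) = 0 := Nat.choose_eq_zero_of_lt (by omega)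
    have z3 : (n - k).choose k = 0 := Nat.choose_eq_zero_of_lt (by omega)
    rw [z1, z2, z3]
    simp
  · have hpos : 0 < (k + 1).factorial * (n - 2 * k).factorial :=
      Nat.mul_pos (Nat.factorial_pos _) (Nat.factorial_pos _)
    apply Nat.eq_of_mul_eq_mul_right hpos
    have hL : ((n + 2).choose (k + 1) * ((n + 2) - (k + 1)).choose (k + 1) * (k + 1).factorial)
        * ((k + 1).factorial * (n - 2 * k).factorial) = (n + 2).factorial := by
      have hc := chooseA (n + 2) (k + 1) (by omega)
      have e : (n + 2) - 2 * (k + 1) = n - 2 * k := by omega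
      rw [e] at hc
      exact hc
    have hM : ((n + 1).choose (k + 1) * ((n + 1) - (k + 1)).choose (k + 1) * (k + 1).factorial)
        * ((k + 1).factorial * (n - 2 * k).factorial) = (n + 1).factorial * (n - 2 * k) := by
      rcases Nat.eq_or_lt_of_le h with he | hlt
      · have hz : ((n + 1) - (k + 1)).choose (k + 1) = 0 := by
          have e : (n + 1) - (k + 1) = k := by omega
          rw [e]
          exact Nat.choose_eq_zero_of_lt (by omega)
        have e0 : n - 2 * k = 0 := by omega
        rw [hz, e0]
        simp
      · have hc := chooseA (n + 1) (k + 1) (by omega)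
        have e : (n + 1) - 2 * (k + 1) = n - 2 * k - 1 := by omega
        rw [e] at hc
        have hf : (n - 2 * k).factorial = (n - 2 * k) * (n - 2 * k - 1).factorial := by
          have e2 : n - 2 * k = (n - 2 * k - 1) + 1 := by omega
          calc (n - 2 * k).factorial = ((n - 2 * k - 1) + 1).factorial := by rw [← e2]
            _ = ((n - 2 * k - 1) + 1) * (n - 2 * k - 1).factorial := Nat.factorial_succ _
            _ = (n - 2 * k) * (n - 2 * k - 1).factorial := by rw [← e2]
        calc ((n + 1).choose (k + 1) * ((n + 1) - (k + 1)).choose (k + 1) * (k + 1).factorial)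
              * ((k + 1).factorial * (n - 2 * k).factorial)
            = (((n + 1).choose (k + 1) * ((n + 1) - (k + 1)).choose (k + 1) * (k + 1).factorial)
              * ((k + 1).factorial * (n - 2 * k - 1).factorial)) * (n - 2 * k) := by
              rw [hf]; ring
          _ = (n + 1).factorial * (n - 2 * k) := by rw [hc]
    have hR : (2 * (n + 1) * (n.choose k * (n - k).choose k * k.factorial))
        * ((k + 1).factorial * (n - 2 * k).factorial)
        = 2 * (n + 1) * (k + 1) * n.factorial := by
      have hc := chooseA n k h
      calc (2 * (n + 1) * (n.choose k * (n - k).choose k * k.factorial))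
            * ((k + 1).factorial * (n - 2 * k).factorial)
          = 2 * (n + 1) * (k + 1) *
              (n.choose k * (n - k).choose k * k.factorial
                * (k.factorial * (n - 2 * k).factorial)) := by
            rw [Nat.factorial_succ]; ring
        _ = 2 * (n + 1) * (k + 1) * n.factorial := by rw [hc]
    rw [Nat.add_mul, hL, hM, hR]
    have key : (n - 2 * k) + 2 * (k + 1) = n + 2 := by omega
    calc (n + 2).factorial = (n + 1).factorial * (n + 2) := by
          rw [Nat.factorial_succ (n + 1)]; ring
      _ = (n + 1).factorial * ((n - 2 * k) + 2 * (k + 1)) := by rw [key]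
      _ = (n + 1).factorial * (n - 2 * k) + (n + 1).factorial * (2 * (k + 1)) := by ring
      _ = (n + 1).factorial * (n - 2 * k) + 2 * (n + 1) * (k + 1) * n.factorial := by
          rw [Nat.factorial_succ n]; ring

lemma two_pow_Jinv (n : ℕ) : ∀ k, 2 ^ k * Jinv n k = n.choose k * (n - k).choose k * k.factorial := by
  induction n using Nat.strong_induction_on with
  | _ n ih =>
    intro k
    match n, k with
    | n, 0 => simp [Jinv_zero]
    | 0, k + 1 => simp [Jinv]
    | 1, k + 1 =>
      rcases k with _ | k
      · simp [Jinv]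
      · simp [Jinv, Nat.choose_eq_zero_of_lt (show 1 < k + 2 by omega)]
    | n + 2, k + 1 =>
      rw [Jinv_rec, Nat.mul_add]
      rw [ih (n + 1) (by omega) (k + 1)]
      have e : 2 ^ (k + 1) * ((n + 1) * Jinv n k) = 2 * (n + 1) * (2 ^ k * Jinv n k) := by ring
      rw [e, ih n (by omega) k]
      exact (A_rec n k).symm

end Arith

section Main

lemma EAvoid_one (π : Equiv.Perm (Fin 1)) : EAvoid 1 π := by
  intro i j hi hj hij
  omega

lemma des_one (π : Equiv.Perm (Fin 1)) : des 1 π = 0 := by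
  unfold des
  convert Set.ncard_empty ℕ
  ext i
  simp only [Set.mem_setOf_eq, Set.mem_empty_iff_false, iff_false]
  rintro ⟨h, -⟩
  omega

lemma main_count : ∀ m : ℕ,
    (∀ k ≤ m, (ASet (m + 1) (m - k)).ncard = Jinv (m + 1) k) ∧
    (∀ k ≤ m, (BSet m (m - k)).ncard = Jinv m k) := by
  intro m
  induction m with
  | zero =>
    constructor
    · intro k hk
      interval_cases k
      have hU : ASet 1 0 = Set.univ := by
        ext π
        simp [ASet, EAvoid_one, des_one]
      rw [hU, Set.ncard_univ, Nat.card_eq_fintype_card]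
      simp [Fintype.card_perm, Jinv_zero]
    · intro k hk
      interval_cases k
      have hU : BSet 0 0 = Set.univ := by
        ext π
        simp only [BSet, Set.mem_setOf_eq, Set.mem_univ, iff_true]
        exact ⟨EAvoid_one π, des_one π, Fin.ext (by omega)⟩
      rw [hU, Set.ncard_univ, Nat.card_eq_fintype_card]
      simp [Fintype.card_perm, Jinv_zero]
  | succ m IH =>
    obtain ⟨IHP, IHQ⟩ := IH
    have Qs : ∀ k ≤ m + 1, (BSet (m + 1) (m + 1 - k)).ncard = Jinv (m + 1) k := by
      intro k hk
      rcases Nat.lt_or_ge k (m + 1) with h | h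
      · have e : m + 1 - k = (m - k) + 1 := by omega
        rw [e, BSet_succ_ncard, IHP k (by omega)]
      · have e : k = m + 1 := by omega
        subst e
        have e0 : m + 1 - (m + 1) = 0 := by omega
        rw [e0, BSet_zero, Set.ncard_empty, Jinv_big (m + 1) (m + 1) (by omega)]
    refine ⟨?_, Qs⟩
    intro k hk
    rw [ASet_split (m + 1) (m + 1 - k), Qs k hk]
    rcases Nat.eq_zero_or_pos k with rfl | hpos
    · rw [Nat.sub_zero, CSet_ncard, BSet_large m (m + 1) (by omega), Set.ncard_empty]
      simp [Jinv_zero]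
    · obtain ⟨k', rfl⟩ : ∃ k', k = k' + 1 := ⟨k - 1, by omega⟩
      have e : m + 1 - (k' + 1) = m - k' := by omega
      rw [e, CSet_ncard, IHQ k' (by omega)]
      show Jinv (m + 1) (k' + 1) + Jinv m k' * (m + 1) = Jinv (m + 2) (k' + 1)
      rw [Jinv_rec]
      ring

end Main


/-- The `x^{n-k}` coefficient of the `n`-th Eulerian polynomial for
{(a-bc), (a-cb)}-avoiding permutations is `C(n,k)·C(n-k,k)·k!/2^k`. -/
theorem eulerian_poly_coeff (n k : ℕ) (hn : 1 ≤ n) (hk : k ≤ n) :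
    2 ^ k * {π : Equiv.Perm (Fin n) |
        AvoidsAdBC n π ∧ AvoidsAdCB n π ∧ 1 + des n π = n - k}.ncard =
      n.choose k * (n - k).choose k * k.factorial := by
  obtain ⟨m, rfl⟩ : ∃ m, n = m + 1 := ⟨n - 1, by omega⟩
  rcases Nat.lt_or_ge k (m + 1) with hkm | hkm
  · have hset : {π : Equiv.Perm (Fin (m + 1)) |
        AvoidsAdBC (m + 1) π ∧ AvoidsAdCB (m + 1) π ∧ 1 + des (m + 1) π = m + 1 - k}
        = ASet (m + 1) (m - k) := by
      ext π
      simp only [Set.mem_setOf_eq, ASet]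
      constructor
      · rintro ⟨h1, h2, h3⟩
        exact ⟨(eavoid_iff _ π).mp ⟨h1, h2⟩, by omega⟩
      · rintro ⟨hA, hd⟩
        obtain ⟨h1, h2⟩ := (eavoid_iff _ π).mpr hA
        exact ⟨h1, h2, by omega⟩
    rw [hset, (main_count m).1 k (by omega), two_pow_Jinv]
  · have hk1 : k = m + 1 := by omega
    subst hk1
    have hset : {π : Equiv.Perm (Fin (m + 1)) |
        AvoidsAdBC (m + 1) π ∧ AvoidsAdCB (m + 1) π ∧ 1 + des (m + 1) π = m + 1 - (m + 1)}
        = ∅ := by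
      ext π
      simp only [Set.mem_setOf_eq, Set.mem_empty_iff_false, iff_false]
      rintro ⟨-, -, h⟩
      omega
    rw [hset, Set.ncard_empty, Nat.mul_zero]
    have hz : (m + 1 - (m + 1)).choose (m + 1) = 0 := by
      rw [Nat.sub_self]
      exact Nat.choose_eq_zero_of_lt (by omega)
    rw [hz]
    simp
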